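/- Let t_1, …, t_m be independent with t_j ~ Exp(μ_j), where μ_j ≥ c·min{j, m+1−j} for some constant c > 0 and all 1 ≤ j ≤ m. Let T = Σ t_j. Then for every 0 < λ < c there is a constant C (depending only on c and λ, not on m) such that E[e^{λT}] ≤ exp(λ·Σ_j 1/μ_j + C). -/

import Mathlib

open MeasureTheory ProbabilityTheory Finset


-- mgf of the exponential distribution
lemma my_integral_exp_expMeasure {r lam : ℝ} (hr : 0 < r) (h : lam < r) :
    ∫ x, Real.exp (lam * x) ∂(expMeasure r) = r / (r - lam) := by
  have hb : 0 < r - lam := by linarith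
  have hmeas : Measurable (exponentialPDF r) :=
    (measurable_exponentialPDFReal r).ennreal_ofReal
  have hexp : expMeasure r = volume.withDensity (exponentialPDF r) := rfl
  -- integrand on ℝ
  set g : ℝ → ℝ := Set.indicator (Set.Ici (0:ℝ)) (fun x => r * Real.exp (-(r - lam) * x)) with hg
  have hgint : Integrable g := by
    rw [hg, integrable_indicator_iff measurableSet_Ici]
    apply Integrable.const_mul
    exact (integrableOn_Ici_iff_integrableOn_Ioi (by simp)).2 (exp_neg_integrableOn_Ioi 0 hb)
  have hgeq : ∀ x : ℝ, exponentialPDF r x * ENNReal.ofReal (Real.exp (lam * x))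
      = ENNReal.ofReal (g x) := by
    intro x
    rcases le_or_gt 0 x with hx | hx
    · rw [exponentialPDF_of_nonneg hx, hg, Set.indicator_of_mem (Set.mem_Ici.2 hx),
        ← ENNReal.ofReal_mul (by positivity)]
      congr 1
      rw [mul_assoc, ← Real.exp_add]
      ring_nf
    · rw [exponentialPDF_of_neg hx, hg, Set.indicator_of_notMem (by simpa using hx), zero_mul,
        ENNReal.ofReal_zero]
  calc ∫ x, Real.exp (lam * x) ∂(expMeasure r)
      = (∫⁻ x, ENNReal.ofReal (Real.exp (lam * x)) ∂(expMeasure r)).toReal := by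
        apply integral_eq_lintegral_of_nonneg_ae
        · exact Filter.Eventually.of_forall fun x => (Real.exp_pos _).le
        · exact (measurable_const.mul measurable_id').exp.aestronglyMeasurable
    _ = (∫⁻ x, exponentialPDF r x * ENNReal.ofReal (Real.exp (lam * x))).toReal := by
        rw [hexp, lintegral_withDensity_eq_lintegral_mul _ hmeas
          (by fun_prop : Measurable fun x : ℝ => ENNReal.ofReal (Real.exp (lam * x)))]
        rfl
    _ = (∫⁻ x, ENNReal.ofReal (g x)).toReal := by simp_rw [hgeq]
    _ = ∫ x, g x := by
        rw [← ofReal_integral_eq_lintegral_ofReal hgint]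
        · rw [ENNReal.toReal_ofReal]
          exact integral_nonneg fun x => Set.indicator_nonneg (fun y _ => by positivity) x
        · exact Filter.Eventually.of_forall fun x => Set.indicator_nonneg (fun y _ => by positivity) x
    _ = ∫ x in Set.Ici (0:ℝ), r * Real.exp (-(r - lam) * x) := by
        rw [hg, integral_indicator measurableSet_Ici]
    _ = r / (r - lam) := by
        rw [integral_Ici_eq_integral_Ioi, integral_const_mul]
        have h2 := Real.integral_rpow_mul_exp_neg_mul_Ioi (a := 1) (r := r - lam) one_pos hb
        simp only [sub_self, Real.rpow_zero, one_mul, Real.rpow_one] at h2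
        simp_rw [neg_mul]
        rw [h2, Real.Gamma_one]
        field_simp

lemma my_sum_inv_sq (m : ℕ) : ∑ j ∈ Finset.Icc 1 m, ((j:ℝ) ^ 2)⁻¹ ≤ 2 := by
  have h : Finset.Icc 1 m = Finset.Ioo 0 (m+1) := by
    ext x; simp [Nat.lt_succ_iff, Nat.succ_le_iff]
  rw [h]
  simpa using sum_Ioo_inv_sq_le (α := ℝ) 0 (m+1)

lemma my_sum_min_le (m : ℕ) :
    ∑ j ∈ Finset.Icc 1 m, (((min j (m + 1 - j) : ℕ) : ℝ) ^ 2)⁻¹ ≤ 4 := by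
  have key : ∀ j ∈ Finset.Icc 1 m, (((min j (m + 1 - j) : ℕ) : ℝ) ^ 2)⁻¹
      ≤ ((j:ℝ) ^ 2)⁻¹ + (((m + 1 - j : ℕ) : ℝ) ^ 2)⁻¹ := by
    intro j hj
    rcases min_choice j (m + 1 - j) with h | h <;> rw [h]
    · have : (0:ℝ) ≤ (((m + 1 - j : ℕ):ℝ) ^ 2)⁻¹ := by positivity
      linarith
    · have : (0:ℝ) ≤ ((j:ℝ) ^ 2)⁻¹ := by positivity
      linarith
  apply (Finset.sum_le_sum key).trans
  rw [Finset.sum_add_distrib]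
  have hrefl : ∑ j ∈ Finset.Icc 1 m, (((m + 1 - j : ℕ) : ℝ) ^ 2)⁻¹
      = ∑ j ∈ Finset.Icc 1 m, ((j:ℝ) ^ 2)⁻¹ := by
    apply Finset.sum_nbij' (fun j => m + 1 - j) (fun j => m + 1 - j)
    · intro a ha
      simp only [Finset.mem_Icc] at ha ⊢
      omega
    · intro a ha
      simp only [Finset.mem_Icc] at ha ⊢
      omega
    · intro a ha
      simp only [Finset.mem_Icc] at ha
      omega
    · intro a ha
      simp only [Finset.mem_Icc] at ha
      omega
    · intro a ha; rfl
  rw [hrefl]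
  have := my_sum_inv_sq m
  linarith

/-- If `t_j ~ Exp(μ_j)` are independent with `μ_j ≥ c·min{j, m+1−j}`, then for each
`0 < λ < c` there is a constant `C` (depending only on `c` and `λ`, not on `m` or the
probability space) with `E[e^{λT}] ≤ exp(λ Σ_j 1/μ_j + C)` for `T = Σ_j t_j`. -/
theorem stmt_9 (c : ℝ) (hc : 0 < c) (lam : ℝ) (hlam0 : 0 < lam) (hlamc : lam < c) :
    ∃ C : ℝ, ∀ (m : ℕ) (μ : ℕ → ℝ)
      (_ : ∀ j ∈ Finset.Icc 1 m, c * (min j (m + 1 - j) : ℕ) ≤ μ j)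
      (Ω : Type) (_ : MeasurableSpace Ω) (P : Measure Ω) (_ : IsProbabilityMeasure P)
      (t : ℕ → Ω → ℝ) (_ : ∀ j, Measurable (t j))
      (_ : iIndepFun t P)
      (_ : ∀ j ∈ Finset.Icc 1 m, Measure.map (t j) P = expMeasure (μ j)),
      ∫ ω, Real.exp (lam * ∑ j ∈ Finset.Icc 1 m, t j ω) ∂P
        ≤ Real.exp (lam * ∑ j ∈ Finset.Icc 1 m, 1 / μ j + C) := by
  have hclam : 0 < c - lam := by linarith
  set K : ℝ := lam ^ 2 / (c * (c - lam)) with hK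
  have hK0 : 0 ≤ K := by positivity
  refine ⟨4 * K, ?_⟩
  intro m μ hμ Ω mΩ P hP t htm hindep hmap
  -- basic facts about each index
  have hmin1 : ∀ j ∈ Finset.Icc 1 m, (1:ℝ) ≤ ((min j (m + 1 - j) : ℕ) : ℝ) := by
    intro j hj
    simp only [Finset.mem_Icc] at hj
    have : 1 ≤ min j (m + 1 - j) := by omega
    exact_mod_cast this
  have hμlam : ∀ j ∈ Finset.Icc 1 m, lam < μ j := by
    intro j hj
    have h1 := hμ j hj
    have h2 := hmin1 j hj
    nlinarith
  -- rewrite LHS as mgf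
  have hA : (∫ ω, Real.exp (lam * ∑ j ∈ Finset.Icc 1 m, t j ω) ∂P)
      = mgf (∑ j ∈ Finset.Icc 1 m, t j) P lam := by
    simp only [mgf, Finset.sum_apply]
  rw [hA, hindep.mgf_sum htm]
  have hmgf : ∀ j ∈ Finset.Icc 1 m, mgf (t j) P lam = μ j / (μ j - lam) := by
    intro j hj
    have hμ0 : 0 < μ j := lt_trans hlam0 (hμlam j hj)
    have : mgf (t j) P lam = ∫ x, Real.exp (lam * x) ∂(Measure.map (t j) P) := by
      rw [mgf, integral_map (htm j).aemeasurable
        (by fun_prop : Measurable fun x : ℝ => Real.exp (lam * x)).aestronglyMeasurable]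
    rw [this, hmap j hj, my_integral_exp_expMeasure hμ0 (hμlam j hj)]
  rw [Finset.prod_congr rfl hmgf]
  -- per-term bound
  have hterm : ∀ j ∈ Finset.Icc 1 m, μ j / (μ j - lam)
      ≤ Real.exp (lam * (1 / μ j) + K * (((min j (m + 1 - j) : ℕ) : ℝ) ^ 2)⁻¹) := by
    intro j hj
    set k : ℝ := ((min j (m + 1 - j) : ℕ) : ℝ) with hk
    have hk1 : 1 ≤ k := hmin1 j hj
    have ha : c * k ≤ μ j := hμ j hj
    have halam : lam < μ j := hμlam j hj
    have ha0 : 0 < μ j := lt_trans hlam0 halam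
    have hd0 : 0 < μ j - lam := by linarith
    have h1 : μ j / (μ j - lam) ≤ Real.exp (lam / (μ j - lam)) := by
      have he := Real.add_one_le_exp (lam / (μ j - lam))
      have heq : μ j / (μ j - lam) = lam / (μ j - lam) + 1 := by field_simp; ring
      rw [heq]; exact he
    refine h1.trans (Real.exp_le_exp.2 ?_)
    have h2 : lam / (μ j - lam) = lam * (1 / μ j) + lam ^ 2 / (μ j * (μ j - lam)) := by
      field_simp
      try ring
    rw [h2]
    have h3 : lam ^ 2 / (μ j * (μ j - lam)) ≤ K * (k ^ 2)⁻¹ := by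
      have hKk : K * (k ^ 2)⁻¹ = lam ^ 2 / (c * (c - lam) * k ^ 2) := by
        rw [hK]; field_simp; try ring
      rw [hKk]
      apply div_le_div_of_nonneg_left (by positivity) (by positivity)
      have hs1 : k * (c - lam) ≤ μ j - lam := by
        nlinarith [mul_nonneg (sub_nonneg.2 hk1) hlam0.le]
      nlinarith [mul_le_mul ha hs1 (by positivity : (0:ℝ) ≤ k * (c - lam)) ha0.le]
    linarith
  calc ∏ j ∈ Finset.Icc 1 m, μ j / (μ j - lam)
      ≤ ∏ j ∈ Finset.Icc 1 m,
          Real.exp (lam * (1 / μ j) + K * (((min j (m + 1 - j) : ℕ) : ℝ) ^ 2)⁻¹) := by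
        apply Finset.prod_le_prod
        · intro j hj
          have h := hμlam j hj
          exact div_nonneg (by linarith) (by linarith)
        · exact hterm
    _ = Real.exp (∑ j ∈ Finset.Icc 1 m,
          (lam * (1 / μ j) + K * (((min j (m + 1 - j) : ℕ) : ℝ) ^ 2)⁻¹)) :=
        (Real.exp_sum _ _).symm
    _ ≤ Real.exp (lam * ∑ j ∈ Finset.Icc 1 m, 1 / μ j + 4 * K) := by
        apply Real.exp_le_exp.2
        rw [Finset.sum_add_distrib, ← Finset.mul_sum, ← Finset.mul_sum]
        have h4 := my_sum_min_le m
        nlinarith [mul_le_mul_of_nonneg_left h4 hK0]
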